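/- Let K be a field, c ∈ K* not a root of unity, R = K[t,t⁻¹] with the automorphism γ(t) = ct. Let P be the R-module of rational functions on 𝔾ₘ with at most simple poles at the points c^i (i ∈ ℤ) and regular elsewhere, with its natural Γ-equivariant structure, and Q = ⊕_{i∈ℤ} R/(t − c^i). Then the short exact sequence of Γ-equivariant R-modules 0 → R → P → Q → 0 does not split, R and Q are irreducible non-isomorphic Γ-equivariant R-modules, and P is Schur irreducible (End = K) but not irreducible. -/

import Mathlib

noncomputable section

variable {K : Type} [Field K]

/-- The Laurent polynomial subalgebra `R = K[t,t⁻¹]` inside the field of rational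
functions `K(t)`. -/
def Rsub (K : Type) [Field K] : Subalgebra K (RatFunc K) :=
  Algebra.adjoin K {RatFunc.X, RatFunc.X⁻¹}

/-- `R` as a `K`-subspace of `K(t)`. -/
def Rmod (K : Type) [Field K] : Submodule K (RatFunc K) :=
  Subalgebra.toSubmodule (Rsub K)

/-- The space `P` of rational functions with at most simple poles at the points
`c^i`, `i ∈ ℤ`, and regular elsewhere on `𝔾ₘ`:
`P = R + span_K {1/(t - c^i) : i ∈ ℤ}`. -/
def Pmod (c : Kˣ) : Submodule K (RatFunc K) :=
  Rmod K ⊔ Submodule.span K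
    {f : RatFunc K | ∃ i : ℤ, f = (RatFunc.X - RatFunc.C ((c ^ i : Kˣ) : K))⁻¹}

/-- A subspace `W` of `K(t)` is an equivariant `R`-submodule if it is stable under
multiplication by `R` and under `γ` and `γ⁻¹`. -/
def Stab (Γ : RatFunc K ≃ₐ[K] RatFunc K) (W : Submodule K (RatFunc K)) : Prop :=
  (∀ r ∈ Rsub K, ∀ f ∈ W, r * f ∈ W) ∧ (∀ f ∈ W, Γ f ∈ W) ∧ (∀ f ∈ W, Γ.symm f ∈ W)

/-- The action of `t` on the model `Q = ⊕_{i ∈ ℤ} R/(t - c^i) ≅ ⊕_{i ∈ ℤ} K`: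
multiplication by `c^i` in the `i`-th component. -/
def tQ (c : Kˣ) : (ℤ →₀ K) →ₗ[K] (ℤ →₀ K) :=
  Finsupp.lsum K fun i => ((c ^ i : Kˣ) : K) • Finsupp.lsingle i

/-- The action of `γ` on the model `Q`: `γ` sends the skyscraper at `c^{i+1}` to
the skyscraper at `c^i`, with the factor `c⁻¹` coming from `γ(t) = ct`. -/
def γQ (c : Kˣ) : (ℤ →₀ K) →ₗ[K] (ℤ →₀ K) :=
  Finsupp.lsum K fun i => ((c⁻¹ : Kˣ) : K) • Finsupp.lsingle (i - 1)

/-- The inverse of `γQ`. -/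
def γQinv (c : Kˣ) : (ℤ →₀ K) →ₗ[K] (ℤ →₀ K) :=
  Finsupp.lsum K fun i => ((c : Kˣ) : K) • Finsupp.lsingle (i + 1)

theorem X_sub_C_ne (d : K) : (RatFunc.X - RatFunc.C d : RatFunc K) ≠ 0 := by
  rw [sub_ne_zero]
  intro h
  have : (Polynomial.X : Polynomial K) = Polynomial.C d := by
    apply RatFunc.algebraMap_injective K
    simpa [RatFunc.algebraMap_X, RatFunc.algebraMap_C] using h
  exact Polynomial.X_ne_C d this

theorem X_mem_Rsub : (RatFunc.X : RatFunc K) ∈ Rsub K :=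
  Algebra.subset_adjoin (Set.mem_insert _ _)

theorem Xinv_mem_Rsub : (RatFunc.X⁻¹ : RatFunc K) ∈ Rsub K :=
  Algebra.subset_adjoin (Set.mem_insert_of_mem _ rfl)

theorem zpowX_mem_Rsub (n : ℤ) : (RatFunc.X : RatFunc K) ^ n ∈ Rsub K := by
  cases n with
  | ofNat m => simpa using Subalgebra.pow_mem _ X_mem_Rsub m
  | negSucc m =>
    rw [zpow_negSucc, ← inv_pow]
    exact Subalgebra.pow_mem _ Xinv_mem_Rsub _

theorem Rmod_eq_span :
    Rmod K = Submodule.span K (Set.range fun n : ℤ => (RatFunc.X : RatFunc K) ^ n) := by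
  rw [Rmod, Rsub, Algebra.adjoin_eq_span]
  congr 1
  apply le_antisymm
  · intro x hx
    induction hx using Submonoid.closure_induction with
    | mem y hy =>
      rcases hy with h | h
      · exact ⟨1, by simp [h]⟩
      · rw [Set.mem_singleton_iff] at h
        exact ⟨-1, by simp [h]⟩
    | one => exact ⟨0, by simp⟩
    | mul y z _ _ hy hz =>
      obtain ⟨n, rfl⟩ := hy
      obtain ⟨m, rfl⟩ := hz
      exact ⟨n + m, (zpow_add₀ RatFunc.X_ne_zero n m)⟩
  · rintro x ⟨n, rfl⟩
    have h1 : (RatFunc.X : RatFunc K) ∈ Submonoid.closure {RatFunc.X, RatFunc.X⁻¹} :=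
      Submonoid.subset_closure (Set.mem_insert _ _)
    have h2 : (RatFunc.X⁻¹ : RatFunc K) ∈ Submonoid.closure {RatFunc.X, RatFunc.X⁻¹} :=
      Submonoid.subset_closure (Set.mem_insert_of_mem _ rfl)
    have : ∀ m : ℤ, (RatFunc.X : RatFunc K) ^ m ∈ Submonoid.closure {RatFunc.X, RatFunc.X⁻¹} := by
      intro m
      cases m with
      | ofNat k => simpa using pow_mem h1 k
      | negSucc k =>
        rw [zpow_negSucc, ← inv_pow]
        exact pow_mem h2 _
    exact this n

/-- every element of `R` becomes polynomial after multiplying by a power of `X`. -/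

theorem Rsub_poly_form {r : RatFunc K} (hr : r ∈ Rsub K) :
    ∃ (n : ℕ) (p : Polynomial K),
      (RatFunc.X : RatFunc K) ^ n * r = algebraMap (Polynomial K) (RatFunc K) p := by
  induction hr using Algebra.adjoin_induction with
  | mem y hy =>
    rcases hy with h | h
    · exact ⟨0, Polynomial.X, by simp [h, RatFunc.algebraMap_X]⟩
    · rw [Set.mem_singleton_iff] at h
      exact ⟨1, 1, by simp [h, RatFunc.X_ne_zero]⟩
  | algebraMap k => exact ⟨0, Polynomial.C k, by simp [RatFunc.algebraMap_C]⟩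
  | add y z _ _ hy hz =>
    obtain ⟨n1, p1, h1⟩ := hy
    obtain ⟨n2, p2, h2⟩ := hz
    refine ⟨n1 + n2, Polynomial.X ^ n2 * p1 + Polynomial.X ^ n1 * p2, ?_⟩
    rw [mul_add, map_add, map_mul, map_mul, ← h1, ← h2, map_pow, map_pow,
      RatFunc.algebraMap_X]
    ring
  | mul y z _ _ hy hz =>
    obtain ⟨n1, p1, h1⟩ := hy
    obtain ⟨n2, p2, h2⟩ := hz
    refine ⟨n1 + n2, p1 * p2, ?_⟩
    rw [map_mul, ← h1, ← h2]
    ring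

def T (K : Type) [Field K] : (ℤ →₀ K) →ₗ[K] RatFunc K :=
  Finsupp.linearCombination K (fun n : ℤ => (RatFunc.X : RatFunc K) ^ n)

theorem T_eq_zero {a : ℤ →₀ K} (h : T K a = 0) : a = 0 := by
  classical
  by_contra hne
  obtain ⟨m, hm⟩ := Finsupp.ne_iff.mp hne
  rw [Finsupp.coe_zero, Pi.zero_apply] at hm
  have hmsupp : m ∈ a.support := Finsupp.mem_support_iff.mpr hm
  set N : ℕ := a.support.sup fun n => n.natAbs with hN
  have hnonneg : ∀ n ∈ a.support, (0 : ℤ) ≤ n + N := by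
    intro n hn
    have : n.natAbs ≤ N := Finset.le_sup (f := fun n : ℤ => n.natAbs) hn
    omega
  set p : Polynomial K :=
    a.support.sum (fun n => Polynomial.C (a n) * Polynomial.X ^ (n + N).toNat) with hp
  have hmap : algebraMap (Polynomial K) (RatFunc K) p = (RatFunc.X : RatFunc K) ^ (N : ℤ) * T K a := by
    rw [hp, map_sum]
    rw [T, Finsupp.linearCombination_apply, Finsupp.sum, Finset.mul_sum]
    apply Finset.sum_congr rfl
    intro n hn
    rw [map_mul, map_pow, RatFunc.algebraMap_X, RatFunc.algebraMap_C]
    rw [Algebra.smul_def, RatFunc.algebraMap_eq_C]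
    rw [← zpow_natCast (RatFunc.X : RatFunc K) ((n + N).toNat),
      Int.toNat_of_nonneg (hnonneg n hn)]
    rw [mul_left_comm, ← zpow_add₀ RatFunc.X_ne_zero]
    ring_nf
  have hp0 : p = 0 := by
    have := hmap
    rw [h, mul_zero] at this
    exact (map_eq_zero_iff _ (RatFunc.algebraMap_injective K)).mp this
  have : p.coeff ((m + N).toNat) = a m := by
    rw [hp, Polynomial.finset_sum_coeff]
    rw [Finset.sum_eq_single m]
    · simp
    · intro n hn hnm
      have h1 := hnonneg n hn
      have h2 := hnonneg m hmsupp
      simp only [Polynomial.coeff_C_mul, Polynomial.coeff_X_pow]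
      rw [if_neg (by omega)]
      simp
    · intro h; exact absurd hmsupp h
  rw [hp0] at this
  simp at this
  exact hm this.symm

def dK (c : Kˣ) (i : ℤ) : K := ((c ^ i : Kˣ) : K)

def eF (c : Kˣ) (i : ℤ) : RatFunc K := (RatFunc.X - RatFunc.C (dK c i))⁻¹

theorem dK_ne_zero (c : Kˣ) (i : ℤ) : dK c i ≠ 0 := Units.ne_zero _

theorem zpow_ne_one (c : Kˣ) (hroot : ∀ n : ℕ, 0 < n → c ^ n ≠ 1) :
    ∀ n : ℤ, n ≠ 0 → c ^ n ≠ 1 := by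
  have key : ∀ n : ℤ, 0 < n → c ^ n ≠ 1 := by
    intro n hn h
    refine hroot n.toNat (by omega) ?_
    rwa [← zpow_natCast, Int.toNat_of_nonneg hn.le]
  intro n hn h
  rcases lt_trichotomy n 0 with h1 | h1 | h1
  · refine key (-n) (by omega) ?_
    rw [zpow_neg, h, inv_one]
  · exact hn h1
  · exact key n h1 h

theorem dK_inj (c : Kˣ) (hroot : ∀ n : ℕ, 0 < n → c ^ n ≠ 1) {i j : ℤ} (hij : i ≠ j) :
    dK c i ≠ dK c j := by
  intro h
  have : (c ^ i : Kˣ) = c ^ j := Units.ext h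
  have : c ^ (i - j) = 1 := by
    rw [zpow_sub, this, mul_inv_cancel]
  exact zpow_ne_one c hroot (i - j) (by omega) this

theorem C_mul_eq_smul (k : K) (f : RatFunc K) : RatFunc.C k * f = k • f := by
  rw [Algebra.smul_def, RatFunc.algebraMap_eq_C]

theorem sub_mul_eF (c : Kˣ) (i j : ℤ) :
    (RatFunc.X - RatFunc.C (dK c j)) * eF c i
      = 1 + (dK c i - dK c j) • eF c i := by
  have hne := X_sub_C_ne (dK c i)
  have hsplit : (RatFunc.X - RatFunc.C (dK c j) : RatFunc K)
      = (RatFunc.X - RatFunc.C (dK c i)) + RatFunc.C (dK c i - dK c j) := by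
    rw [map_sub]; ring
  rw [eF, hsplit, add_mul, mul_inv_cancel₀ hne, C_mul_eq_smul]

theorem X_mul_eF (c : Kˣ) (i : ℤ) :
    RatFunc.X * eF c i = 1 + dK c i • eF c i := by
  have hne := X_sub_C_ne (dK c i)
  rw [eF]
  set y : RatFunc K := RatFunc.X - RatFunc.C (dK c i) with hy
  rw [show (RatFunc.X : RatFunc K) = y + RatFunc.C (dK c i) by rw [hy]; ring]
  rw [add_mul, mul_inv_cancel₀ hne, C_mul_eq_smul]

theorem eF_not_mem_Rmod (c : Kˣ) (i : ℤ) : eF c i ∉ Rmod K := by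
  intro hmem
  obtain ⟨n, p, hp⟩ := Rsub_poly_form (r := eF c i) hmem
  have h1 : (RatFunc.X - RatFunc.C (dK c i)) * eF c i = 1 :=
    mul_inv_cancel₀ (X_sub_C_ne (dK c i))
  have h2 : algebraMap (Polynomial K) (RatFunc K) (p * (Polynomial.X - Polynomial.C (dK c i)))
      = algebraMap (Polynomial K) (RatFunc K) (Polynomial.X ^ n) := by
    rw [map_mul, ← hp, map_sub, RatFunc.algebraMap_X, RatFunc.algebraMap_C, map_pow,
      RatFunc.algebraMap_X, mul_assoc, mul_comm (eF c i), h1, mul_one]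
  have h3 := RatFunc.algebraMap_injective K h2
  have h4 := congrArg (Polynomial.eval (dK c i)) h3
  simp at h4
  exact absurd h4.symm (pow_ne_zero n (dK_ne_zero c i))

def E (c : Kˣ) : (ℤ →₀ K) →ₗ[K] RatFunc K := Finsupp.linearCombination K (eF c)

theorem E_mem_Rmod (c : Kˣ) (hroot : ∀ n : ℕ, 0 < n → c ^ n ≠ 1)
    {b : ℤ →₀ K} (hb : E c b ∈ Rmod K) : b = 0 := by
  classical
  suffices H : ∀ (n : ℕ) (b : ℤ →₀ K), b.support.card = n → E c b ∈ Rmod K → b = 0 from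
    H _ b rfl hb
  intro n
  induction n using Nat.strong_induction_on with
  | _ n ih =>
    intro b hcard hmem
    by_contra hne
    obtain ⟨j, hj⟩ := Finset.Nonempty.exists_mem (Finsupp.support_nonempty_iff.mpr hne)
    set b' : ℤ →₀ K :=
      Finsupp.onFinset b.support (fun i => (dK c i - dK c j) * b i)
        (fun i h => Finsupp.mem_support_iff.mpr (right_ne_zero_of_mul h)) with hb'
    -- E c b' is the shifted relation
    have hEb' : E c b' = (RatFunc.X - RatFunc.C (dK c j)) * E c b
        - algebraMap K (RatFunc K) (b.sum fun _ k => k) := by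
      rw [E, Finsupp.linearCombination_apply, Finsupp.linearCombination_apply]
      rw [Finsupp.sum_of_support_subset b' Finsupp.support_onFinset_subset _
        (fun i _ => zero_smul K (eF c i))]
      rw [Finsupp.sum, Finsupp.sum, Finset.mul_sum, map_sum, ← Finset.sum_sub_distrib]
      apply Finset.sum_congr rfl
      intro i hi
      show b' i • eF c i = _
      rw [hb', Finsupp.onFinset_apply, mul_smul_comm, sub_mul_eF c i j, smul_add, smul_smul,
        Algebra.algebraMap_eq_smul_one, add_sub_cancel_left, mul_comm]
    have hmem' : E c b' ∈ Rmod K := by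
      rw [hEb']
      have h1 : (RatFunc.X - RatFunc.C (dK c j) : RatFunc K) ∈ Rsub K :=
        sub_mem X_mem_Rsub (by
          rw [← RatFunc.algebraMap_eq_C]; exact Subalgebra.algebraMap_mem _ _)
      have h2 : E c b ∈ Rsub K := hmem
      exact (Subalgebra.mem_toSubmodule _).mpr
        (sub_mem (mul_mem h1 h2) (Subalgebra.algebraMap_mem _ _))
    -- support of b' is support of b minus j
    have hsupp' : b'.support = b.support.erase j := by
      ext i
      simp only [Finset.mem_erase, Finsupp.mem_support_iff, Finsupp.onFinset_apply, hb']
      constructor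
      · intro h
        refine ⟨fun hij => ?_, fun h0 => h (by rw [h0, mul_zero])⟩
        rw [hij] at h; simp at h
      · rintro ⟨hij, h0⟩
        exact mul_ne_zero (sub_ne_zero.mpr (dK_inj c hroot hij)) h0
    have hcard' : b'.support.card < n := by
      rw [hsupp', ← hcard]
      exact Finset.card_erase_lt_of_mem hj
    have hb'0 : b' = 0 := ih _ hcard' b' rfl hmem'
    -- hence b is supported at j only
    set k : K := b j with hk
    have hbj : b = Finsupp.single j k := by
      ext i
      rcases eq_or_ne i j with rfl | hij
      · rw [Finsupp.single_eq_same]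
      · rw [Finsupp.single_apply, if_neg (Ne.symm hij)]
        by_contra h0
        have : b' i = 0 := by rw [hb'0]; rfl
        rw [hb', Finsupp.onFinset_apply] at this
        exact h0 (by
          rcases mul_eq_zero.mp this with h | h
          · exact absurd h (sub_ne_zero.mpr (dK_inj c hroot hij))
          · exact h)
    rw [hbj] at hmem
    rw [E, Finsupp.linearCombination_single] at hmem
    have hbj0 : k ≠ 0 := Finsupp.mem_support_iff.mp hj
    have : eF c j ∈ Rmod K := by
      have := Submodule.smul_mem (Rmod K) k⁻¹ hmem
      rwa [smul_smul, inv_mul_cancel₀ hbj0, one_smul] at this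
    exact eF_not_mem_Rmod c j this

theorem C_mem_Rsub (k : K) : (RatFunc.C k : RatFunc K) ∈ Rsub K := by
  rw [← RatFunc.algebraMap_eq_C]; exact Subalgebra.algebraMap_mem _ _

section GammaSec
variable (c : Kˣ) (Γ : RatFunc K ≃ₐ[K] RatFunc K)
  (hΓ : Γ RatFunc.X = RatFunc.C (c : K) * RatFunc.X)

theorem Γ_C (k : K) : Γ (RatFunc.C k) = RatFunc.C k := by
  rw [← RatFunc.algebraMap_eq_C]; exact Γ.commutes k

include hΓ

theorem Γ_Xinv : Γ (RatFunc.X⁻¹) = RatFunc.C ((c : K))⁻¹ * RatFunc.X⁻¹ := by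
  rw [map_inv₀, hΓ, mul_inv, map_inv₀, mul_comm]

theorem Γsymm_X : Γ.symm RatFunc.X = RatFunc.C ((c : K))⁻¹ * RatFunc.X := by
  rw [AlgEquiv.symm_apply_eq, map_mul, hΓ, Γ_C, ← mul_assoc, ← map_mul,
    inv_mul_cancel₀ (Units.ne_zero c), map_one, one_mul]

theorem Γsymm_Xinv : Γ.symm (RatFunc.X⁻¹) = RatFunc.C (c : K) * RatFunc.X⁻¹ := by
  rw [map_inv₀, Γsymm_X c Γ hΓ, mul_inv, map_inv₀, inv_inv, mul_comm]

theorem Γ_Rsub {r : RatFunc K} (hr : r ∈ Rsub K) : Γ r ∈ Rsub K := by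
  induction hr using Algebra.adjoin_induction with
  | mem y hy =>
    rcases hy with h | h
    · rw [h, hΓ]
      exact mul_mem (C_mem_Rsub _) X_mem_Rsub
    · rw [Set.mem_singleton_iff] at h
      rw [h, Γ_Xinv c Γ hΓ]
      exact mul_mem (C_mem_Rsub _) Xinv_mem_Rsub
  | algebraMap k => rw [Γ.commutes]; exact Subalgebra.algebraMap_mem _ _
  | add y z _ _ hy hz => rw [map_add]; exact add_mem hy hz
  | mul y z _ _ hy hz => rw [map_mul]; exact mul_mem hy hz

theorem Γsymm_Rsub {r : RatFunc K} (hr : r ∈ Rsub K) : Γ.symm r ∈ Rsub K := by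
  induction hr using Algebra.adjoin_induction with
  | mem y hy =>
    rcases hy with h | h
    · rw [h, Γsymm_X c Γ hΓ]
      exact mul_mem (C_mem_Rsub _) X_mem_Rsub
    · rw [Set.mem_singleton_iff] at h
      rw [h, Γsymm_Xinv c Γ hΓ]
      exact mul_mem (C_mem_Rsub _) Xinv_mem_Rsub
  | algebraMap k => rw [AlgEquiv.commutes]; exact Subalgebra.algebraMap_mem _ _
  | add y z _ _ hy hz => rw [map_add]; exact add_mem hy hz
  | mul y z _ _ hy hz => rw [map_mul]; exact mul_mem hy hz

omit hΓ

theorem dK_succ (i : ℤ) : dK c i = (c : K) * dK c (i - 1) := by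
  rw [dK, dK, ← Units.val_mul]
  congr 1
  rw [zpow_sub_one]
  group

include hΓ

theorem Γ_zpowX (n : ℤ) :
    Γ ((RatFunc.X : RatFunc K) ^ n) = dK c n • (RatFunc.X : RatFunc K) ^ n := by
  rw [map_zpow₀, hΓ, mul_zpow, ← map_zpow₀ (RatFunc.C : K →+* RatFunc K), C_mul_eq_smul]
  congr 2
  exact (Units.val_zpow_eq_zpow_val c n).symm

theorem Γ_eF (i : ℤ) : Γ (eF c i) = ((c : K))⁻¹ • eF c (i - 1) := by
  rw [eF, map_inv₀, map_sub, hΓ, Γ_C]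
  have h : RatFunc.C (c : K) * RatFunc.X - RatFunc.C (dK c i)
      = RatFunc.C (c : K) * (RatFunc.X - RatFunc.C (dK c (i - 1))) := by
    rw [mul_sub, ← map_mul, ← dK_succ]
  rw [h, mul_inv, ← eF, ← map_inv₀ (RatFunc.C : K →+* RatFunc K), C_mul_eq_smul]

theorem Γsymm_eF (i : ℤ) : Γ.symm (eF c i) = (c : K) • eF c (i + 1) := by
  rw [AlgEquiv.symm_apply_eq, map_smul, Γ_eF c Γ hΓ, add_sub_cancel_right, smul_smul,
    mul_inv_cancel₀ (Units.ne_zero c), one_smul]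

end GammaSec

theorem tQ_apply (c : Kˣ) (a : ℤ →₀ K) (j : ℤ) : tQ c a j = dK c j * a j := by
  induction a using Finsupp.induction_linear with
  | zero => simp
  | add f g hf hg => rw [map_add, Finsupp.add_apply, hf, hg, Finsupp.add_apply, mul_add]
  | single i k =>
    rw [tQ, Finsupp.lsum_single, LinearMap.smul_apply, Finsupp.lsingle_apply,
      Finsupp.smul_single, Finsupp.single_apply, Finsupp.single_apply]
    rcases eq_or_ne i j with rfl | h
    · simp [dK]
    · rw [if_neg h, if_neg h, mul_zero]

theorem γQ_apply (c : Kˣ) (a : ℤ →₀ K) (j : ℤ) : γQ c a j = ((c⁻¹ : Kˣ) : K) * a (j + 1) := by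
  induction a using Finsupp.induction_linear with
  | zero => simp
  | add f g hf hg => rw [map_add, Finsupp.add_apply, hf, hg, Finsupp.add_apply, mul_add]
  | single i k =>
    rw [γQ, Finsupp.lsum_single, LinearMap.smul_apply, Finsupp.lsingle_apply,
      Finsupp.smul_single, Finsupp.single_apply, Finsupp.single_apply]
    rcases eq_or_ne i (j + 1) with rfl | h
    · rw [if_pos (by omega), if_pos rfl, smul_eq_mul]
    · rw [if_neg (by omega), if_neg h, mul_zero]

theorem γQinv_apply (c : Kˣ) (a : ℤ →₀ K) (j : ℤ) : γQinv c a j = (c : K) * a (j - 1) := by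
  induction a using Finsupp.induction_linear with
  | zero => simp
  | add f g hf hg => rw [map_add, Finsupp.add_apply, hf, hg, Finsupp.add_apply, mul_add]
  | single i k =>
    rw [γQinv, Finsupp.lsum_single, LinearMap.smul_apply, Finsupp.lsingle_apply,
      Finsupp.smul_single, Finsupp.single_apply, Finsupp.single_apply]
    rcases eq_or_ne i (j - 1) with rfl | h
    · rw [if_pos (by omega), if_pos rfl, smul_eq_mul]
    · rw [if_neg (by omega), if_neg h, mul_zero]

theorem tQ_single (c : Kˣ) (i : ℤ) (k : K) :
    tQ c (Finsupp.single i k) = Finsupp.single i (dK c i * k) := by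
  rw [tQ, Finsupp.lsum_single, LinearMap.smul_apply, Finsupp.lsingle_apply, Finsupp.smul_single]
  rfl

theorem γQ_single (c : Kˣ) (i : ℤ) (k : K) :
    γQ c (Finsupp.single i k) = Finsupp.single (i - 1) (((c⁻¹ : Kˣ) : K) * k) := by
  rw [γQ, Finsupp.lsum_single, LinearMap.smul_apply, Finsupp.lsingle_apply, Finsupp.smul_single,
    smul_eq_mul]

theorem γQinv_single (c : Kˣ) (i : ℤ) (k : K) :
    γQinv c (Finsupp.single i k) = Finsupp.single (i + 1) ((c : K) * k) := by
  rw [γQinv, Finsupp.lsum_single, LinearMap.smul_apply, Finsupp.lsingle_apply, Finsupp.smul_single,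
    smul_eq_mul]

theorem E_single (c : Kˣ) (i : ℤ) (k : K) : E c (Finsupp.single i k) = k • eF c i := by
  rw [E, Finsupp.linearCombination_single]

-- multiplication rule

theorem X_mul_E (c : Kˣ) (b : ℤ →₀ K) :
    RatFunc.X * E c b = algebraMap K (RatFunc K) (b.sum fun _ k => k) + E c (tQ c b) := by
  induction b using Finsupp.induction_linear with
  | zero => simp
  | add f g hf hg =>
    rw [map_add, mul_add, hf, hg,
      show (tQ c) (f + g) = tQ c f + tQ c g from map_add _ _ _,
      show (E c) (tQ c f + tQ c g) = E c (tQ c f) + E c (tQ c g) from map_add _ _ _,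
      Finsupp.sum_add_index' (fun _ => rfl) (fun _ _ _ => rfl), map_add]
    ring
  | single i k =>
    rw [E_single, tQ_single, E_single, Finsupp.sum_single_index rfl, mul_smul_comm, X_mul_eF,
      smul_add, Algebra.algebraMap_eq_smul_one, smul_smul, mul_comm k (dK c i)]

theorem Γ_E (c : Kˣ) (Γ : RatFunc K ≃ₐ[K] RatFunc K)
    (hΓ : Γ RatFunc.X = RatFunc.C (c : K) * RatFunc.X) (b : ℤ →₀ K) :
    Γ (E c b) = E c (γQ c b) := by
  induction b using Finsupp.induction_linear with
  | zero => simp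
  | add f g hf hg => simp only [map_add, hf, hg]
  | single i k =>
    rw [E_single, map_smul, Γ_eF c Γ hΓ, γQ_single, E_single, smul_smul,
      Units.val_inv_eq_inv_val, mul_comm]

theorem Γ_T (c : Kˣ) (Γ : RatFunc K ≃ₐ[K] RatFunc K)
    (hΓ : Γ RatFunc.X = RatFunc.C (c : K) * RatFunc.X) (a : ℤ →₀ K) :
    Γ (T K a) = T K (tQ c a) := by
  induction a using Finsupp.induction_linear with
  | zero => simp
  | add f g hf hg => simp only [map_add, hf, hg]
  | single i k =>
    rw [T, Finsupp.linearCombination_single, map_smul, Γ_zpowX c Γ hΓ, tQ_single,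
      Finsupp.linearCombination_single, smul_smul, mul_comm]

-- the decomposition machinery

def Φ (c : Kˣ) : ((Rmod K) × (ℤ →₀ K)) →ₗ[K] RatFunc K := (Rmod K).subtype.coprod (E c)

theorem Pmod_eq_range (c : Kˣ) : Pmod c = LinearMap.range (Φ c) := by
  rw [Pmod, Φ, LinearMap.range_coprod, Submodule.range_subtype, E,
    Finsupp.range_linearCombination]
  congr 2
  ext f
  exact ⟨fun ⟨i, h⟩ => ⟨i, h.symm⟩, fun ⟨i, h⟩ => ⟨i, h.symm⟩⟩

theorem Φ_inj (c : Kˣ) (hroot : ∀ n : ℕ, 0 < n → c ^ n ≠ 1) : Function.Injective (Φ c) := by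
  rw [← LinearMap.ker_eq_bot]
  rw [eq_bot_iff]
  rintro ⟨r, b⟩ hz
  have h : (r : RatFunc K) + E c b = 0 := hz
  have hEb : E c b ∈ Rmod K := by
    have : E c b = -(r : RatFunc K) := by linear_combination h
    rw [this]
    exact neg_mem r.2
  have hb0 : b = 0 := E_mem_Rmod c hroot hEb
  have hr0 : (r : RatFunc K) = 0 := by rw [hb0, map_zero, add_zero] at h; exact h
  refine Submodule.mem_bot _ |>.mpr ?_
  exact Prod.ext (Subtype.ext hr0) hb0

def Ψ (c : Kˣ) (hroot : ∀ n : ℕ, 0 < n → c ^ n ≠ 1) :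
    ((Rmod K) × (ℤ →₀ K)) ≃ₗ[K] (Pmod c) :=
  (LinearEquiv.ofInjective (Φ c) (Φ_inj c hroot)).trans
    (LinearEquiv.ofEq _ _ (Pmod_eq_range c).symm)

theorem Ψ_coe (c : Kˣ) (hroot : ∀ n : ℕ, 0 < n → c ^ n ≠ 1) (r : Rmod K) (b : ℤ →₀ K) :
    ((Ψ c hroot (r, b) : Pmod c) : RatFunc K) = (r : RatFunc K) + E c b := rfl

def piP (c : Kˣ) (hroot : ∀ n : ℕ, 0 < n → c ^ n ≠ 1) : (Pmod c) →ₗ[K] (ℤ →₀ K) :=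
  (LinearMap.snd K (Rmod K) (ℤ →₀ K)) ∘ₗ ((Ψ c hroot).symm : (Pmod c) →ₗ[K] _)

theorem piP_spec (c : Kˣ) (hroot : ∀ n : ℕ, 0 < n → c ^ n ≠ 1) (f : Pmod c) (r : Rmod K)
    (b : ℤ →₀ K) (h : (f : RatFunc K) = (r : RatFunc K) + E c b) :
    piP c hroot f = b := by
  have : Ψ c hroot (r, b) = f := Subtype.ext (by rw [Ψ_coe, ← h])
  rw [piP, LinearMap.comp_apply, ← this, LinearEquiv.coe_coe, LinearEquiv.symm_apply_apply]
  rfl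

theorem piP_decomp (c : Kˣ) (hroot : ∀ n : ℕ, 0 < n → c ^ n ≠ 1) (f : Pmod c) :
    ∃ r : Rmod K, (f : RatFunc K) = (r : RatFunc K) + E c (piP c hroot f) := by
  have h1 : Ψ c hroot ((Ψ c hroot).symm f) = f := LinearEquiv.apply_symm_apply _ f
  have hco : (f : RatFunc K) = ((((Ψ c hroot).symm f).1 : Rmod K) : RatFunc K)
      + E c ((Ψ c hroot).symm f).2 := by
    conv_lhs => rw [← h1]
    rfl
  exact ⟨_, by rw [piP_spec c hroot f _ _ hco]; exact hco⟩


theorem mem_Pmod_of_Rmod {c : Kˣ} {x : RatFunc K} (hx : x ∈ Rmod K) : x ∈ Pmod c :=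
  le_sup_left (α := Submodule K (RatFunc K)) hx

theorem eF_mem_Pmod (c : Kˣ) (i : ℤ) : eF c i ∈ Pmod c :=
  le_sup_right (α := Submodule K (RatFunc K)) (Submodule.subset_span ⟨i, rfl⟩)

theorem one_mem_Pmod (c : Kˣ) : (1 : RatFunc K) ∈ Pmod c :=
  mem_Pmod_of_Rmod (one_mem (Rsub K))

section PiProps
variable (c : Kˣ) (hroot : ∀ n : ℕ, 0 < n → c ^ n ≠ 1)

theorem piP_surj : Function.Surjective (piP c hroot) := by
  intro b
  refine ⟨Ψ c hroot (0, b), ?_⟩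
  refine piP_spec c hroot _ 0 b ?_
  rw [Ψ_coe]

theorem piP_zero_iff (f : Pmod c) : piP c hroot f = 0 ↔ (f : RatFunc K) ∈ Rmod K := by
  constructor
  · intro h
    obtain ⟨r, hr⟩ := piP_decomp c hroot f
    rw [h, map_zero, add_zero] at hr
    rw [hr]; exact r.2
  · intro hf
    exact piP_spec c hroot f ⟨(f : RatFunc K), hf⟩ 0 (by rw [map_zero, add_zero])

theorem piP_X (f : Pmod c) (hf : RatFunc.X * (f : RatFunc K) ∈ Pmod c) :
    piP c hroot ⟨RatFunc.X * (f : RatFunc K), hf⟩ = tQ c (piP c hroot f) := by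
  obtain ⟨r, hr⟩ := piP_decomp c hroot f
  have hmem : RatFunc.X * (r : RatFunc K)
      + algebraMap K (RatFunc K) ((piP c hroot f).sum fun _ k => k) ∈ Rmod K :=
    (Subalgebra.mem_toSubmodule _).mpr
      (add_mem (mul_mem X_mem_Rsub r.2) (Subalgebra.algebraMap_mem _ _))
  refine piP_spec c hroot _ ⟨_, hmem⟩ (tQ c (piP c hroot f)) ?_
  show RatFunc.X * (f : RatFunc K) = _
  rw [hr, mul_add, X_mul_E]
  ring

theorem piP_Γ (Γ : RatFunc K ≃ₐ[K] RatFunc K)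
    (hΓ : Γ RatFunc.X = RatFunc.C (c : K) * RatFunc.X)
    (f : Pmod c) (hf : Γ (f : RatFunc K) ∈ Pmod c) :
    piP c hroot ⟨Γ (f : RatFunc K), hf⟩ = γQ c (piP c hroot f) := by
  obtain ⟨r, hr⟩ := piP_decomp c hroot f
  have hmem : Γ (r : RatFunc K) ∈ Rmod K :=
    (Subalgebra.mem_toSubmodule _).mpr (Γ_Rsub c Γ hΓ r.2)
  refine piP_spec c hroot _ ⟨_, hmem⟩ (γQ c (piP c hroot f)) ?_
  show Γ (f : RatFunc K) = _
  rw [hr, map_add, Γ_E c Γ hΓ]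

end PiProps

theorem γQ_fixed (c : Kˣ) {b : ℤ →₀ K} (h : γQ c b = b) : b = 0 := by
  by_contra hb
  have hne : b.support.Nonempty := Finsupp.support_nonempty_iff.mpr hb
  set m := b.support.max' hne with hm
  have hmem : m ∈ b.support := b.support.max'_mem hne
  have hm1 : b (m + 1) = 0 := by
    by_contra h1
    have : m + 1 ∈ b.support := Finsupp.mem_support_iff.mpr h1
    have := Finset.le_max' _ _ this
    omega
  have := γQ_apply c b m
  rw [h, hm1, mul_zero] at this
  exact Finsupp.mem_support_iff.mp hmem this


theorem dK_ne_one (c : Kˣ) (hroot : ∀ n : ℕ, 0 < n → c ^ n ≠ 1) {n : ℤ} (hn : n ≠ 0) :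
    dK c n ≠ 1 := by
  intro h
  exact zpow_ne_one c hroot n hn (Units.ext (by rwa [Units.val_one]))

theorem tQ_fixed (c : Kˣ) (hroot : ∀ n : ℕ, 0 < n → c ^ n ≠ 1) {a : ℤ →₀ K}
    (h : tQ c a = a) : a = Finsupp.single 0 (a 0) := by
  ext n
  rcases eq_or_ne n 0 with rfl | hn
  · rw [Finsupp.single_eq_same]
  · rw [Finsupp.single_apply, if_neg (Ne.symm hn)]
    have := tQ_apply c a n
    rw [h] at this
    by_contra h0
    exact dK_ne_one c hroot hn ((mul_left_eq_self₀.mp this.symm).resolve_right h0)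

/-- the subtraction trick : pointwise version. -/
theorem shrink_apply (c : Kˣ) (a : ℤ →₀ K) (j : ℤ) :
    tQ c a - dK c j • a = Finsupp.onFinset a.support (fun i => (dK c i - dK c j) * a i)
      (fun i h => Finsupp.mem_support_iff.mpr (right_ne_zero_of_mul h)) := by
  ext i
  rw [Finsupp.sub_apply, Finsupp.smul_apply, tQ_apply, Finsupp.onFinset_apply, smul_eq_mul,
    sub_mul]

theorem shrink_support (c : Kˣ) (hroot : ∀ n : ℕ, 0 < n → c ^ n ≠ 1) (a : ℤ →₀ K) {j : ℤ}
    (hj : j ∈ a.support) :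
    (tQ c a - dK c j • a).support = a.support.erase j := by
  rw [shrink_apply]
  ext i
  simp only [Finset.mem_erase, Finsupp.mem_support_iff, Finsupp.onFinset_apply]
  constructor
  · intro h
    refine ⟨fun hij => ?_, right_ne_zero_of_mul h⟩
    rw [hij] at h; simp at h
  · rintro ⟨hij, h0⟩
    exact mul_ne_zero (sub_ne_zero.mpr (dK_inj c hroot hij)) h0

theorem shrink_zero (c : Kˣ) (hroot : ∀ n : ℕ, 0 < n → c ^ n ≠ 1) {a : ℤ →₀ K} {j : ℤ}
    (h : tQ c a - dK c j • a = 0) : a = Finsupp.single j (a j) := by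
  ext i
  rcases eq_or_ne i j with rfl | hij
  · rw [Finsupp.single_eq_same]
  · rw [Finsupp.single_apply, if_neg (Ne.symm hij)]
    have := congrArg (fun z : ℤ →₀ K => z i) h
    simp only [shrink_apply, Finsupp.onFinset_apply, Finsupp.coe_zero, Pi.zero_apply] at this
    rcases mul_eq_zero.mp this with h' | h'
    · exact absurd h' (sub_ne_zero.mpr (dK_inj c hroot hij))
    · exact h'

theorem Qirr (c : Kˣ) (hroot : ∀ n : ℕ, 0 < n → c ^ n ≠ 1) (Wq : Submodule K (ℤ →₀ K))
    (htW : ∀ a ∈ Wq, tQ c a ∈ Wq)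
    (hγW : ∀ a ∈ Wq, γQ c a ∈ Wq) (hγiW : ∀ a ∈ Wq, γQinv c a ∈ Wq) :
    Wq = ⊥ ∨ Wq = ⊤ := by
  by_cases hbot : Wq = ⊥
  · exact Or.inl hbot
  right
  obtain ⟨a0, ha0W, ha0⟩ := Submodule.exists_mem_ne_zero_of_ne_bot hbot
  -- step 1 : find a single in Wq
  have key : ∀ (N : ℕ) (a : ℤ →₀ K), a.support.card = N → a ≠ 0 → a ∈ Wq →
      ∃ (j : ℤ) (k : K), k ≠ 0 ∧ Finsupp.single j k ∈ Wq := by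
    intro N
    induction N using Nat.strong_induction_on with
    | _ N ih =>
      intro a hcard ha haW
      obtain ⟨j, hj⟩ := Finset.Nonempty.exists_mem (Finsupp.support_nonempty_iff.mpr ha)
      have ha'W : tQ c a - dK c j • a ∈ Wq :=
        sub_mem (htW a haW) (Submodule.smul_mem _ _ haW)
      rcases eq_or_ne (tQ c a - dK c j • a) 0 with h0 | hne
      · refine ⟨j, a j, Finsupp.mem_support_iff.mp hj, ?_⟩
        rw [← shrink_zero c hroot h0]
        exact haW
      · refine ih _ ?_ _ rfl hne ha'W
        rw [shrink_support c hroot a hj, ← hcard]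
        exact Finset.card_erase_lt_of_mem hj
  obtain ⟨j, k, hk, hkW⟩ := key _ a0 rfl ha0 ha0W
  -- step 2 : propagate to all singles
  have all : ∀ g : ℤ, ∃ k : K, k ≠ 0 ∧ Finsupp.single (j + g) k ∈ Wq := by
    intro g
    induction g using Int.induction_on with
    | zero => exact ⟨k, hk, by rwa [add_zero]⟩
    | succ n ihn =>
      obtain ⟨k', hk', hW'⟩ := ihn
      refine ⟨(c : K) * k', mul_ne_zero (Units.ne_zero c) hk', ?_⟩
      have := hγiW _ hW'
      rw [γQinv_single] at this
      rwa [show j + ((n : ℤ) + 1) = j + n + 1 by ring]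
    | pred n ihn =>
      obtain ⟨k', hk', hW'⟩ := ihn
      refine ⟨((c⁻¹ : Kˣ) : K) * k', mul_ne_zero (Units.ne_zero c⁻¹) hk', ?_⟩
      have := hγW _ hW'
      rw [γQ_single] at this
      rwa [show j + (-(n : ℤ) - 1) = j + -(n : ℤ) - 1 by ring]
  rw [eq_top_iff]
  intro x _
  rw [← Finsupp.sum_single x]
  refine Submodule.sum_mem _ fun i _ => ?_
  obtain ⟨k', hk', hW'⟩ := all (i - j)
  rw [show j + (i - j) = i by ring] at hW'
  have : Finsupp.single i (x i) = (x i * k'⁻¹) • Finsupp.single i k' := by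
    rw [Finsupp.smul_single, smul_eq_mul, mul_assoc, inv_mul_cancel₀ hk', mul_one]
  rw [this]
  exact Submodule.smul_mem _ _ hW'


theorem Rmod_mem_iff {x : RatFunc K} :
    x ∈ Rmod K ↔ ∃ a : ℤ →₀ K, T K a = x := by
  rw [Rmod_eq_span]
  constructor
  · intro h
    obtain ⟨a, ha⟩ := Finsupp.mem_span_range_iff_exists_finsupp.mp h
    exact ⟨a, by rw [T, Finsupp.linearCombination_apply]; exact ha⟩
  · rintro ⟨a, rfl⟩
    exact Finsupp.mem_span_range_iff_exists_finsupp.mpr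
      ⟨a, (Finsupp.linearCombination_apply _ a).symm⟩

theorem Rirr (c : Kˣ) (hroot : ∀ n : ℕ, 0 < n → c ^ n ≠ 1)
    (Γ : RatFunc K ≃ₐ[K] RatFunc K) (hΓ : Γ RatFunc.X = RatFunc.C (c : K) * RatFunc.X)
    (W : Submodule K (RatFunc K)) (hstab : Stab Γ W) (hle : W ≤ Rmod K) :
    W = ⊥ ∨ W = Rmod K := by
  by_cases hbot : W = ⊥
  · exact Or.inl hbot
  right
  obtain ⟨w, hwW, hw0⟩ := Submodule.exists_mem_ne_zero_of_ne_bot hbot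
  obtain ⟨a, hTa⟩ := Rmod_mem_iff.mp (hle hwW)
  have key : ∀ (N : ℕ) (a : ℤ →₀ K), a.support.card = N → a ≠ 0 → T K a ∈ W →
      ∃ n : ℤ, (RatFunc.X : RatFunc K) ^ n ∈ W := by
    intro N
    induction N using Nat.strong_induction_on with
    | _ N ih =>
      intro a hcard ha haW
      obtain ⟨j, hj⟩ := Finset.Nonempty.exists_mem (Finsupp.support_nonempty_iff.mpr ha)
      have hTa' : T K (tQ c a - dK c j • a) ∈ W := by
        rw [map_sub, map_smul, ← Γ_T c Γ hΓ]
        exact sub_mem (hstab.2.1 _ haW) (Submodule.smul_mem _ _ haW)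
      rcases eq_or_ne (tQ c a - dK c j • a) 0 with h0 | hne
      · have hja : a j ≠ 0 := Finsupp.mem_support_iff.mp hj
        refine ⟨j, ?_⟩
        have : T K a = a j • (RatFunc.X : RatFunc K) ^ j := by
          conv_lhs => rw [shrink_zero c hroot h0]
          rw [T, Finsupp.linearCombination_single]
        have h2 : (a j)⁻¹ • T K a ∈ W := Submodule.smul_mem _ _ haW
        rwa [this, smul_smul, inv_mul_cancel₀ hja, one_smul] at h2
      · refine ih _ ?_ _ rfl hne hTa'
        rw [shrink_support c hroot a hj, ← hcard]
        exact Finset.card_erase_lt_of_mem hj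
  have ha0 : a ≠ 0 := by
    rintro rfl
    rw [map_zero] at hTa
    exact hw0 hTa.symm
  obtain ⟨n, hXn⟩ := key _ a rfl ha0 (by rwa [hTa])
  refine le_antisymm hle ?_
  rw [Rmod_eq_span, Submodule.span_le]
  rintro _ ⟨m, rfl⟩
  have := hstab.1 _ (zpowX_mem_Rsub (m - n)) _ hXn
  rwa [← zpow_add₀ RatFunc.X_ne_zero, sub_add_cancel] at this


theorem Schur (c : Kˣ) (hroot : ∀ n : ℕ, 0 < n → c ^ n ≠ 1)
    (Γ : RatFunc K ≃ₐ[K] RatFunc K) (hΓ : Γ RatFunc.X = RatFunc.C (c : K) * RatFunc.X)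
    (φ : (Pmod c : Submodule K (RatFunc K)) →ₗ[K] (Pmod c : Submodule K (RatFunc K)))
    (hmul : ∀ r ∈ Rsub K, ∀ (f : Pmod c) (hrf : r * (f : RatFunc K) ∈ Pmod c),
      (φ ⟨r * (f : RatFunc K), hrf⟩ : RatFunc K) = r * (φ f : RatFunc K))
    (hgam : ∀ (f : Pmod c) (hf : Γ (f : RatFunc K) ∈ Pmod c),
      (φ ⟨Γ (f : RatFunc K), hf⟩ : RatFunc K) = Γ (φ f : RatFunc K)) :
    ∃ k : K, φ = k • LinearMap.id := by
  classical
  set one : Pmod c := ⟨1, one_mem_Pmod c⟩ with hone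
  set g : Pmod c := φ one with hg
  have h1 : Γ ((one : Pmod c) : RatFunc K) ∈ Pmod c := by
    show Γ (1 : RatFunc K) ∈ Pmod c
    rw [map_one]; exact one_mem_Pmod c
  have hfix : Γ (g : RatFunc K) = (g : RatFunc K) := by
    have h := hgam one h1
    have he : (⟨Γ ((one : Pmod c) : RatFunc K), h1⟩ : Pmod c) = one :=
      Subtype.ext (map_one Γ)
    rw [he] at h
    exact h.symm
  obtain ⟨r, hr⟩ := piP_decomp c hroot g
  have hmemΓ : Γ (g : RatFunc K) ∈ Pmod c := by rw [hfix]; exact g.2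
  have hbfix : γQ c (piP c hroot g) = piP c hroot g := by
    have h := piP_Γ c hroot Γ hΓ g hmemΓ
    have he : (⟨Γ (g : RatFunc K), hmemΓ⟩ : Pmod c) = g := Subtype.ext hfix
    rw [he] at h
    exact h.symm
  have hb0 : piP c hroot g = 0 := γQ_fixed c hbfix
  have hgR : (g : RatFunc K) ∈ Rmod K := by
    rw [hr, hb0, map_zero, add_zero]; exact r.2
  obtain ⟨a, hTa⟩ := Rmod_mem_iff.mp hgR
  have hafix : tQ c a = a := by
    have h : T K (tQ c a) = T K a := by rw [← Γ_T c Γ hΓ, hTa, hfix]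
    have hdiff : T K (tQ c a - a) = 0 := by rw [map_sub, h, sub_self]
    exact sub_eq_zero.mp (T_eq_zero hdiff)
  set k := a 0 with hk
  have ha : a = Finsupp.single 0 k := tQ_fixed c hroot hafix
  have hgC : (g : RatFunc K) = RatFunc.C k := by
    rw [← hTa, ha, T, Finsupp.linearCombination_single, zpow_zero, ← C_mul_eq_smul, mul_one]
  -- values on R
  have hRcase : ∀ (x : RatFunc K) (hx : x ∈ Rmod K) (hxP : x ∈ Pmod c),
      (φ ⟨x, hxP⟩ : RatFunc K) = k • x := by
    intro x hx hxP
    have hx1 : x * ((one : Pmod c) : RatFunc K) ∈ Pmod c := by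
      show x * (1 : RatFunc K) ∈ Pmod c
      rw [mul_one]; exact hxP
    have h := hmul x hx one hx1
    have he : (⟨x * ((one : Pmod c) : RatFunc K), hx1⟩ : Pmod c) = ⟨x, hxP⟩ :=
      Subtype.ext (mul_one x)
    rw [he] at h
    rw [h, ← hg, hgC, mul_comm, C_mul_eq_smul]
  -- values on poles
  have hECase : ∀ (i : ℤ) (hxP : eF c i ∈ Pmod c),
      (φ ⟨eF c i, hxP⟩ : RatFunc K) = k • eF c i := by
    intro i hxP
    have hmem : (RatFunc.X - RatFunc.C (dK c i)) ∈ Rsub K :=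
      sub_mem X_mem_Rsub (C_mem_Rsub _)
    have hprod : (RatFunc.X - RatFunc.C (dK c i)) * eF c i = 1 :=
      mul_inv_cancel₀ (X_sub_C_ne _)
    have hP1 : (RatFunc.X - RatFunc.C (dK c i))
        * ((⟨eF c i, hxP⟩ : Pmod c) : RatFunc K) ∈ Pmod c := by
      show (RatFunc.X - RatFunc.C (dK c i)) * eF c i ∈ Pmod c
      rw [hprod]; exact one_mem_Pmod c
    have h := hmul _ hmem ⟨eF c i, hxP⟩ hP1
    have he : (⟨(RatFunc.X - RatFunc.C (dK c i))
        * ((⟨eF c i, hxP⟩ : Pmod c) : RatFunc K), hP1⟩ : Pmod c) = one :=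
      Subtype.ext hprod
    rw [he] at h
    have h2 : (φ ⟨eF c i, hxP⟩ : RatFunc K) = eF c i * (g : RatFunc K) := by
      apply mul_left_cancel₀ (X_sub_C_ne (dK c i))
      rw [← h, ← mul_assoc, hprod, one_mul, hg]
    rw [h2, hgC, mul_comm, C_mul_eq_smul]
  -- values on the span of the poles
  have hspan : ∀ z ∈ Submodule.span K
      {f : RatFunc K | ∃ i : ℤ, f = (RatFunc.X - RatFunc.C ((c ^ i : Kˣ) : K))⁻¹},
      ∀ hzP : z ∈ Pmod c, (φ ⟨z, hzP⟩ : RatFunc K) = k • z := by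
    intro z hz
    induction hz using Submodule.span_induction with
    | mem w hw =>
      obtain ⟨i, rfl⟩ := hw
      exact hECase i
    | zero =>
      intro h0P
      have : (⟨(0 : RatFunc K), h0P⟩ : Pmod c) = 0 := rfl
      rw [this, map_zero, smul_zero]
      rfl
    | add u v hu hv hiu hiv =>
      intro hP
      have huP : u ∈ Pmod c := le_sup_right (α := Submodule K (RatFunc K)) hu
      have hvP : v ∈ Pmod c := le_sup_right (α := Submodule K (RatFunc K)) hv
      have he : (⟨u + v, hP⟩ : Pmod c) = ⟨u, huP⟩ + ⟨v, hvP⟩ := rfl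
      rw [he, map_add, Submodule.coe_add, hiu huP, hiv hvP, smul_add]
    | smul t u hu hiu =>
      intro hP
      have huP : u ∈ Pmod c := le_sup_right (α := Submodule K (RatFunc K)) hu
      have he : (⟨t • u, hP⟩ : Pmod c) = t • ⟨u, huP⟩ := rfl
      rw [he, map_smul, SetLike.val_smul, hiu huP, smul_comm]
  refine ⟨k, ?_⟩
  apply LinearMap.ext
  intro f
  rw [LinearMap.smul_apply, LinearMap.id_apply]
  apply Subtype.ext
  rw [SetLike.val_smul]
  show (φ f : RatFunc K) = k • (f : RatFunc K)
  obtain ⟨y, hy, z, hz, hyz⟩ := Submodule.mem_sup.mp f.2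
  have hyP : y ∈ Pmod c := mem_Pmod_of_Rmod hy
  have hzP : z ∈ Pmod c := le_sup_right (α := Submodule K (RatFunc K)) hz
  have he : f = ⟨y, hyP⟩ + ⟨z, hzP⟩ := Subtype.ext hyz.symm
  rw [he, map_add, Submodule.coe_add, Submodule.coe_add, hRcase y hy hyP, hspan z hz hzP,
    smul_add]

/-- Let `c ∈ K*` not be a root of unity and `γ` the automorphism
of `K(t)` over `K` with `γ(t) = ct`, acting on `R = K[t,t⁻¹]`. Let `P` be the
`Γ`-equivariant `R`-module of rational functions with at most simple poles at the
points `c^i` (`i ∈ ℤ`) and `Q = ⊕_{i∈ℤ} R/(t - c^i)`. Then: the sequence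
`0 → R → P → Q → 0` of equivariant modules is exact and does not split; `R` and
`Q` are irreducible and non-isomorphic; and `P` is Schur irreducible but not
irreducible. -/
theorem stmt16 (c : Kˣ) (hroot : ∀ n : ℕ, 0 < n → c ^ n ≠ 1)
    (Γ : RatFunc K ≃ₐ[K] RatFunc K) (hΓ : Γ RatFunc.X = RatFunc.C (c : K) * RatFunc.X) :
    -- exactness: `P/R ≅ Q` equivariantly
    (∃ π : (Pmod c : Submodule K (RatFunc K)) →ₗ[K] (ℤ →₀ K),
      Function.Surjective π ∧
      (∀ f : Pmod c, π f = 0 ↔ (f : RatFunc K) ∈ Rmod K) ∧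
      (∀ (f : Pmod c) (hf : RatFunc.X * (f : RatFunc K) ∈ Pmod c),
        π ⟨RatFunc.X * (f : RatFunc K), hf⟩ = tQ c (π f)) ∧
      (∀ (f : Pmod c) (hf : Γ (f : RatFunc K) ∈ Pmod c),
        π ⟨Γ (f : RatFunc K), hf⟩ = γQ c (π f))) ∧
    -- the sequence does not split
    (¬ ∃ W : Submodule K (RatFunc K),
      Stab Γ W ∧ W ≤ Pmod c ∧ W ⊓ Rmod K = ⊥ ∧ W ⊔ Rmod K = Pmod c) ∧
    -- `R` is irreducible
    (∀ W : Submodule K (RatFunc K), Stab Γ W → W ≤ Rmod K → W = ⊥ ∨ W = Rmod K) ∧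
    -- `Q` is irreducible
    (∀ Wq : Submodule K (ℤ →₀ K),
      (∀ a ∈ Wq, tQ c a ∈ Wq) → (∀ a ∈ Wq, tQ c⁻¹ a ∈ Wq) →
      (∀ a ∈ Wq, γQ c a ∈ Wq) → (∀ a ∈ Wq, γQinv c a ∈ Wq) →
      Wq = ⊥ ∨ Wq = ⊤) ∧
    -- `R` and `Q` are not isomorphic as equivariant `R`-modules
    (¬ ∃ e : (Rmod K : Submodule K (RatFunc K)) ≃ₗ[K] (ℤ →₀ K),
      (∀ (f : Rmod K) (hf : RatFunc.X * (f : RatFunc K) ∈ Rmod K),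
        e ⟨RatFunc.X * (f : RatFunc K), hf⟩ = tQ c (e f)) ∧
      (∀ (f : Rmod K) (hf : Γ (f : RatFunc K) ∈ Rmod K),
        e ⟨Γ (f : RatFunc K), hf⟩ = γQ c (e f))) ∧
    -- `P` is Schur irreducible
    (∀ φ : (Pmod c : Submodule K (RatFunc K)) →ₗ[K] (Pmod c : Submodule K (RatFunc K)),
      (∀ r ∈ Rsub K, ∀ (f : Pmod c) (hrf : r * (f : RatFunc K) ∈ Pmod c),
        (φ ⟨r * (f : RatFunc K), hrf⟩ : RatFunc K) = r * (φ f : RatFunc K)) →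
      (∀ (f : Pmod c) (hf : Γ (f : RatFunc K) ∈ Pmod c),
        (φ ⟨Γ (f : RatFunc K), hf⟩ : RatFunc K) = Γ (φ f : RatFunc K)) →
      ∃ k : K, φ = k • LinearMap.id) ∧
    -- `P` is not irreducible
    (∃ W : Submodule K (RatFunc K),
      Stab Γ W ∧ W ≤ Pmod c ∧ W ≠ ⊥ ∧ W ≠ Pmod c) := by
  have hd0 : dK c 0 = 1 := by rw [dK, zpow_zero, Units.val_one]
  refine ⟨?_, ?_, ?_, ?_, ?_, ?_, ?_⟩
  · -- exactness
    exact ⟨piP c hroot, piP_surj c hroot, piP_zero_iff c hroot, piP_X c hroot,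
      piP_Γ c hroot Γ hΓ⟩
  · -- the sequence does not split
    rintro ⟨W, hstab, hle, hinf, hsup⟩
    set b0 : ℤ →₀ K := Finsupp.single 0 1 with hb0
    set f : Pmod c := Ψ c hroot (0, b0) with hf
    have hπf : piP c hroot f = b0 := by
      rw [hf]
      exact piP_spec c hroot _ 0 b0 (Ψ_coe c hroot 0 b0)
    have hfP : (f : RatFunc K) ∈ W ⊔ Rmod K := by rw [hsup]; exact f.2
    obtain ⟨w, hwW, r, hrR, hwr⟩ := Submodule.mem_sup.mp hfP
    have hwP : w ∈ Pmod c := hle hwW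
    have hrP : r ∈ Pmod c := mem_Pmod_of_Rmod hrR
    have hfe : f = ⟨w, hwP⟩ + ⟨r, hrP⟩ := Subtype.ext hwr.symm
    have hπw : piP c hroot ⟨w, hwP⟩ = b0 := by
      have h0 : piP c hroot ⟨r, hrP⟩ = 0 := (piP_zero_iff c hroot _).mpr hrR
      have h := congrArg (piP c hroot) hfe
      rw [map_add, h0, add_zero, hπf] at h
      exact h.symm
    have hXw : RatFunc.X * w ∈ W := hstab.1 _ X_mem_Rsub w hwW
    have hXwP : RatFunc.X * w ∈ Pmod c := hle hXw
    have hsub : RatFunc.X * w - w ∈ W := sub_mem hXw hwW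
    have hsubP : RatFunc.X * w - w ∈ Pmod c := hle hsub
    have hπsub : piP c hroot ⟨RatFunc.X * w - w, hsubP⟩ = 0 := by
      have he : (⟨RatFunc.X * w - w, hsubP⟩ : Pmod c)
          = ⟨RatFunc.X * w, hXwP⟩ - ⟨w, hwP⟩ := rfl
      rw [he, map_sub]
      have hX := piP_X c hroot ⟨w, hwP⟩ hXwP
      rw [show (⟨RatFunc.X * w, hXwP⟩ : Pmod c)
          = ⟨RatFunc.X * ((⟨w, hwP⟩ : Pmod c) : RatFunc K), hXwP⟩ from rfl, hX, hπw, hb0,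
        tQ_single, hd0, one_mul, sub_self]
    have hmemR : RatFunc.X * w - w ∈ Rmod K := (piP_zero_iff c hroot _).mp hπsub
    have hmem2 : RatFunc.X * w - w ∈ W ⊓ Rmod K := ⟨hsub, hmemR⟩
    rw [hinf] at hmem2
    have hzero : RatFunc.X * w - w = 0 := (Submodule.mem_bot K).mp hmem2
    have hw0 : w = 0 := by
      have h : (RatFunc.X - 1) * w = 0 := by rw [sub_mul, one_mul]; exact hzero
      rcases mul_eq_zero.mp h with h' | h'
      · exact absurd h' (by have := X_sub_C_ne (1 : K); rwa [map_one] at this)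
      · exact h'
    have hw0' : (⟨w, hwP⟩ : Pmod c) = 0 := Subtype.ext hw0
    rw [hw0', map_zero] at hπw
    exact one_ne_zero (Finsupp.single_eq_zero.mp hπw.symm)
  · -- `R` is irreducible
    exact fun W hstab hle => Rirr c hroot Γ hΓ W hstab hle
  · -- `Q` is irreducible
    exact fun Wq h1 h2 h3 h4 => Qirr c hroot Wq h1 h3 h4
  · -- `R` and `Q` are not isomorphic
    rintro ⟨e, het, -⟩
    set f : Rmod K := e.symm (Finsupp.single 0 1) with hf
    have hfX : RatFunc.X * (f : RatFunc K) ∈ Rmod K :=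
      (Subalgebra.mem_toSubmodule _).mpr (mul_mem X_mem_Rsub f.2)
    have h := het f hfX
    have hef : e f = Finsupp.single 0 1 := by rw [hf]; exact e.apply_symm_apply _
    rw [hef, tQ_single, hd0, one_mul, ← hef] at h
    have heq : (⟨RatFunc.X * (f : RatFunc K), hfX⟩ : Rmod K) = f := e.injective h
    have hXf : RatFunc.X * (f : RatFunc K) = (f : RatFunc K) := congrArg Subtype.val heq
    have hf0 : (f : RatFunc K) = 0 := by
      have h' : (RatFunc.X - 1) * (f : RatFunc K) = 0 := by
        rw [sub_mul, one_mul, hXf, sub_self]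
      rcases mul_eq_zero.mp h' with h'' | h''
      · exact absurd h'' (by have := X_sub_C_ne (1 : K); rwa [map_one] at this)
      · exact h''
    have : e f = 0 := by rw [show f = 0 from Subtype.ext hf0, map_zero]
    rw [hef] at this
    exact one_ne_zero (Finsupp.single_eq_zero.mp this)
  · -- `P` is Schur irreducible
    exact Schur c hroot Γ hΓ
  · -- `P` is not irreducible
    refine ⟨Rmod K, ⟨?_, ?_, ?_⟩, le_sup_left, ?_, ?_⟩
    · intro r hr g hg
      exact (Subalgebra.mem_toSubmodule _).mpr (mul_mem hr hg)
    · intro g hg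
      exact (Subalgebra.mem_toSubmodule _).mpr (Γ_Rsub c Γ hΓ hg)
    · intro g hg
      exact (Subalgebra.mem_toSubmodule _).mpr (Γsymm_Rsub c Γ hΓ hg)
    · intro h
      have h1 : (1 : RatFunc K) ∈ Rmod K := one_mem (Rsub K)
      rw [h] at h1
      exact one_ne_zero ((Submodule.mem_bot K).mp h1)
    · intro h
      have h1 : eF c 0 ∈ Rmod K := by rw [h]; exact eF_mem_Pmod c 0
      exact eF_not_mem_Rmod c 0 h1

end
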